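/- arXiv:1012.0117 — 4 statements merged into one kernel-verified Lean document; each statement's English description precedes it below -/
import Mathlib

section
/- Let d = 2r ≥ 4, let ξ₁,…,ξ_d be independent geometric random variables with parameter q ∈ (0,1), and set T = |ξ₁ − ξ₂| + ∑_{i=3}^{d} ξᵢ. Then for every m ∈ ℕ, P(T = m) = (1/(1+q))(1−q)^{d−1} q^m s_{d−1}(γ_m), where s_{d−1}(γ_m) = ∑_{(k₁,…,k_{d−1})∈ℕ^{d−1}: ∑kᵢ=m}(2·1_{k₁≥1} + 1_{k₁=0}). -/
/-- s_{d−1}(γ_m) given by its combinatorial description. -/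
noncomputable def sdim (n m : ℕ) : ℝ :=
  ∑' f : Fin n → ℕ,
    if (∑ i, f i) = m then
      (if h : 0 < n then (if 1 ≤ f ⟨0, h⟩ then (2 : ℝ) else 1) else 1) else 0

open ENNReal

/-- Weight `1` at `0` and `2` elsewhere, as an extended nonnegative real. -/
noncomputable def wE (k : ℕ) : ℝ≥0∞ := if k = 0 then 1 else 2

lemma pair_sum (Q : ℝ≥0∞) (c : ℕ → ℝ≥0∞) :
    ∑' p : ℕ × ℕ, c ((p.1 : ℤ) - p.2).natAbs * Q ^ (p.1 + p.2)
      = (1 - Q ^ 2)⁻¹ * ∑' k : ℕ, wE k * c k * Q ^ k := by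
  set F : ℕ × ℕ → ℝ≥0∞ := fun p => c ((p.1 : ℤ) - p.2).natAbs * Q ^ (p.1 + p.2) with hF
  have hsplit : ∀ p : ℕ × ℕ, F p =
      (if p.1 = p.2 then F p else 0) +
        ((if p.2 < p.1 then F p else 0) + (if p.1 < p.2 then F p else 0)) := by
    intro p
    rcases lt_trichotomy p.1 p.2 with h | h | h
    · simp [h, h.ne, lt_asymm h, not_lt.mpr h.le]
    · simp [h, lt_irrefl]
    · simp [h, h.ne', lt_asymm h, not_lt.mpr h.le]
  have hgeo : ∑' j : ℕ, (Q ^ 2) ^ j = (1 - Q ^ 2)⁻¹ := ENNReal.tsum_geometric _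
  have hdiag : (∑' p : ℕ × ℕ, if p.1 = p.2 then F p else 0) = c 0 * (1 - Q ^ 2)⁻¹ := by
    have hinj : Function.Injective (fun j : ℕ => ((j, j) : ℕ × ℕ)) := by
      intro a b h; simpa using congrArg Prod.fst h
    rw [← hinj.tsum_eq]
    · have hterm : ∀ j : ℕ, (if (j, j).1 = (j, j).2 then F (j, j) else 0) = c 0 * (Q ^ 2) ^ j := by
        intro j
        simp only [if_pos rfl, hF]
        norm_num
        rw [← pow_mul, two_mul]
      rw [tsum_congr hterm, ENNReal.tsum_mul_left, hgeo]
    · intro p hp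
      have h1 : p.1 = p.2 := by by_contra h; simp [h] at hp
      exact ⟨p.1, by rw [Prod.ext_iff]; exact ⟨rfl, h1⟩⟩
  have hlow : (∑' p : ℕ × ℕ, if p.2 < p.1 then F p else 0)
      = (∑' k : ℕ, c (k + 1) * Q ^ (k + 1)) * (1 - Q ^ 2)⁻¹ := by
    have hinj : Function.Injective (fun x : ℕ × ℕ => ((x.2 + x.1 + 1, x.2) : ℕ × ℕ)) := by
      intro a b h
      rw [Prod.ext_iff] at h ⊢
      obtain ⟨h1, h2⟩ := h
      simp only at h1 h2
      omega
    rw [← hinj.tsum_eq]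
    · have hterm : ∀ x : ℕ × ℕ,
          (if (x.2 + x.1 + 1, x.2).2 < (x.2 + x.1 + 1, x.2).1 then F (x.2 + x.1 + 1, x.2) else 0)
            = (c (x.1 + 1) * Q ^ (x.1 + 1)) * (Q ^ 2) ^ x.2 := by
        intro x
        rw [if_pos (by omega), hF]
        simp only
        have h1 : (((x.2 + x.1 + 1 : ℕ) : ℤ) - (x.2 : ℤ)).natAbs = x.1 + 1 := by
          push_cast; omega
        rw [h1, mul_assoc]
        congr 1
        rw [← pow_mul, ← pow_add]
        congr 1
        omega
      rw [tsum_congr hterm,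
        ENNReal.tsum_prod (f := fun k j => c (k + 1) * Q ^ (k + 1) * (Q ^ 2) ^ j)]
      have h2 : ∀ k : ℕ, (∑' j : ℕ, (c (k + 1) * Q ^ (k + 1)) * (Q ^ 2) ^ j)
          = (c (k + 1) * Q ^ (k + 1)) * (1 - Q ^ 2)⁻¹ := by
        intro k; rw [ENNReal.tsum_mul_left, hgeo]
      rw [tsum_congr h2, ENNReal.tsum_mul_right]
    · intro p hp
      have h1 : p.2 < p.1 := by by_contra h; simp [h] at hp
      exact ⟨(p.1 - p.2 - 1, p.2), by rw [Prod.ext_iff]; constructor <;> simp <;> omega⟩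
  have hupp : (∑' p : ℕ × ℕ, if p.1 < p.2 then F p else 0)
      = (∑' k : ℕ, c (k + 1) * Q ^ (k + 1)) * (1 - Q ^ 2)⁻¹ := by
    have hinj : Function.Injective (fun x : ℕ × ℕ => ((x.2, x.2 + x.1 + 1) : ℕ × ℕ)) := by
      intro a b h
      rw [Prod.ext_iff] at h ⊢
      obtain ⟨h1, h2⟩ := h
      simp only at h1 h2
      omega
    rw [← hinj.tsum_eq]
    · have hterm : ∀ x : ℕ × ℕ,
          (if (x.2, x.2 + x.1 + 1).1 < (x.2, x.2 + x.1 + 1).2 then F (x.2, x.2 + x.1 + 1) else 0)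
            = (c (x.1 + 1) * Q ^ (x.1 + 1)) * (Q ^ 2) ^ x.2 := by
        intro x
        rw [if_pos (by omega), hF]
        simp only
        have h1 : (((x.2 : ℕ) : ℤ) - ((x.2 + x.1 + 1 : ℕ) : ℤ)).natAbs = x.1 + 1 := by
          push_cast; omega
        rw [h1, mul_assoc]
        congr 1
        rw [← pow_mul, ← pow_add]
        congr 1
        omega
      rw [tsum_congr hterm,
        ENNReal.tsum_prod (f := fun k j => c (k + 1) * Q ^ (k + 1) * (Q ^ 2) ^ j)]
      have h2 : ∀ k : ℕ, (∑' j : ℕ, (c (k + 1) * Q ^ (k + 1)) * (Q ^ 2) ^ j)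
          = (c (k + 1) * Q ^ (k + 1)) * (1 - Q ^ 2)⁻¹ := by
        intro k; rw [ENNReal.tsum_mul_left, hgeo]
      rw [tsum_congr h2, ENNReal.tsum_mul_right]
    · intro p hp
      have h1 : p.1 < p.2 := by by_contra h; simp [h] at hp
      exact ⟨(p.2 - p.1 - 1, p.1), by rw [Prod.ext_iff]; constructor <;> simp <;> omega⟩
  have hrhs : (∑' k : ℕ, wE k * c k * Q ^ k)
      = c 0 + 2 * ∑' k : ℕ, c (k + 1) * Q ^ (k + 1) := by
    rw [tsum_eq_zero_add' ENNReal.summable]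
    have h0 : wE 0 * c 0 * Q ^ 0 = c 0 := by simp [wE]
    have h1 : ∀ k : ℕ, wE (k + 1) * c (k + 1) * Q ^ (k + 1)
        = 2 * (c (k + 1) * Q ^ (k + 1)) := by
      intro k; simp [wE, mul_assoc]
    rw [h0, tsum_congr h1, ENNReal.tsum_mul_left]
  rw [tsum_congr hsplit, ENNReal.tsum_add, ENNReal.tsum_add, hdiag, hlow, hupp, hrhs]
  set T := ∑' k : ℕ, c (k + 1) * Q ^ (k + 1)
  set I := (1 - Q ^ 2)⁻¹
  ring

lemma SE_eq (Q : ℝ≥0∞) (n m : ℕ) :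
    (∑' k : ℕ, wE k * (∑' f : Fin n → ℕ, if k + (∑ i, f i) = m then Q ^ (∑ i, f i) else 0) * Q ^ k)
      = Q ^ m * ∑' g : Fin (n + 1) → ℕ, if (∑ i, g i) = m then wE (g 0) else 0 := by
  have hterm : ∀ k : ℕ,
      wE k * (∑' f : Fin n → ℕ, if k + (∑ i, f i) = m then Q ^ (∑ i, f i) else 0) * Q ^ k
        = ∑' f : Fin n → ℕ, (if k + (∑ i, f i) = m then wE k * Q ^ m else 0) := by
    intro k
    rw [mul_assoc, mul_comm (∑' f : Fin n → ℕ, _) (Q ^ k), ← ENNReal.tsum_mul_left,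
      ← ENNReal.tsum_mul_left]
    apply tsum_congr
    intro f
    split_ifs with h
    · rw [show Q ^ m = Q ^ (k + ∑ i, f i) from by rw [h], pow_add]
    · simp
  rw [tsum_congr hterm,
    ← ENNReal.tsum_prod (f := fun k (f : Fin n → ℕ) => if k + (∑ i, f i) = m then wE k * Q ^ m else 0)]
  have he := Equiv.tsum_eq (Fin.consEquiv (fun _ : Fin (n + 1) => ℕ))
    (fun g : Fin (n + 1) → ℕ => if (∑ i, g i) = m then wE (g 0) * Q ^ m else 0)
  have he2 : (∑' p : ℕ × (Fin n → ℕ), if p.1 + (∑ i, p.2 i) = m then wE p.1 * Q ^ m else 0)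
      = ∑' g : Fin (n + 1) → ℕ, if (∑ i, g i) = m then wE (g 0) * Q ^ m else 0 := by
    rw [← he]
    apply tsum_congr
    intro p
    simp [Fin.consEquiv, Fin.sum_cons]
  rw [he2, ← ENNReal.tsum_mul_left]
  apply tsum_congr
  intro g
  split_ifs with h
  · ring
  · simp

lemma main_E (Q E : ℝ≥0∞) (n m : ℕ) :
    (∑' p : (ℕ × ℕ) × (Fin n → ℕ),
      if ((p.1.1 : ℤ) - p.1.2).natAbs + (∑ i, p.2 i) = m then
        (Q ^ p.1.1 * E) * (Q ^ p.1.2 * E) * (∏ i, Q ^ p.2 i * E) else 0)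
    = E ^ (n + 2) * ((1 - Q ^ 2)⁻¹ *
        (Q ^ m * ∑' g : Fin (n + 1) → ℕ, if (∑ i, g i) = m then wE (g 0) else 0)) := by
  set c : ℕ → ℝ≥0∞ :=
    fun k => ∑' f : Fin n → ℕ, if k + (∑ i, f i) = m then Q ^ (∑ i, f i) else 0 with hc
  have hterm : ∀ p : (ℕ × ℕ) × (Fin n → ℕ),
      (if ((p.1.1 : ℤ) - p.1.2).natAbs + (∑ i, p.2 i) = m then
        (Q ^ p.1.1 * E) * (Q ^ p.1.2 * E) * (∏ i, Q ^ p.2 i * E) else 0)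
      = E ^ (n + 2) * (if ((p.1.1 : ℤ) - p.1.2).natAbs + (∑ i, p.2 i) = m then
          Q ^ (p.1.1 + p.1.2) * Q ^ (∑ i, p.2 i) else 0) := by
    intro p
    split_ifs with h
    · rw [Finset.prod_mul_distrib, Finset.prod_const, Finset.prod_pow_eq_pow_sum]
      simp only [Finset.card_univ, Fintype.card_fin]
      rw [pow_add]
      ring
    · rw [mul_zero]
  rw [tsum_congr hterm, ENNReal.tsum_mul_left]
  congr 1
  rw [ENNReal.tsum_prod (f := fun (ab : ℕ × ℕ) (f : Fin n → ℕ) =>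
    if ((ab.1 : ℤ) - ab.2).natAbs + (∑ i, f i) = m then Q ^ (ab.1 + ab.2) * Q ^ (∑ i, f i) else 0)]
  have hinner : ∀ ab : ℕ × ℕ,
      (∑' f : Fin n → ℕ,
        if ((ab.1 : ℤ) - ab.2).natAbs + (∑ i, f i) = m then Q ^ (ab.1 + ab.2) * Q ^ (∑ i, f i) else 0)
      = c (((ab.1 : ℤ) - ab.2).natAbs) * Q ^ (ab.1 + ab.2) := by
    intro ab
    rw [hc]
    simp only
    rw [← ENNReal.tsum_mul_right]
    apply tsum_congr
    intro f
    split_ifs with h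
    · rw [mul_comm]
    · simp
  rw [tsum_congr hinner, pair_sum, SE_eq]

lemma SE_ne_top (n m : ℕ) :
    (∑' g : Fin (n + 1) → ℕ, if (∑ i, g i) = m then wE (g 0) else 0) ≠ ⊤ := by
  have hfin : {g : Fin (n + 1) → ℕ | (∑ i, g i) = m}.Finite := by
    apply Set.Finite.subset (Set.finite_Icc (fun _ => 0 : Fin (n + 1) → ℕ) (fun _ => m))
    intro g hg
    simp only [Set.mem_setOf_eq] at hg
    constructor
    · intro i; exact Nat.zero_le _
    · intro i
      calc g i ≤ ∑ j, g j := Finset.single_le_sum (fun _ _ => Nat.zero_le _) (Finset.mem_univ i)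
        _ = m := hg
  rw [tsum_eq_sum (s := hfin.toFinset) (by
    intro g hg
    rw [Set.Finite.mem_toFinset] at hg
    exact if_neg hg)]
  apply ENNReal.sum_ne_top.mpr
  intro g _
  split_ifs <;> simp [wE] <;> split_ifs <;> simp

lemma wE_ne_top (k : ℕ) : wE k ≠ ⊤ := by
  simp only [wE]; split_ifs <;> simp

lemma sdim_toReal (n m : ℕ) :
    sdim (n + 1) m
      = (∑' g : Fin (n + 1) → ℕ, if (∑ i, g i) = m then wE (g 0) else 0).toReal := by
  rw [ENNReal.tsum_toReal_eq (by
    intro g; split_ifs with h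
    · exact wE_ne_top _
    · simp)]
  apply tsum_congr
  intro g
  by_cases h : (∑ i, g i) = m
  · rw [if_pos h, if_pos h, dif_pos (Nat.succ_pos n)]
    have h0 : (⟨0, Nat.succ_pos n⟩ : Fin (n + 1)) = 0 := rfl
    rw [h0]
    rcases Nat.eq_zero_or_pos (g 0) with hg | hg
    · rw [if_neg (by omega)]
      simp [wE, hg]
    · rw [if_pos (by omega : 1 ≤ g 0)]
      simp [wE, Nat.pos_iff_ne_zero.mp hg]
  · rw [if_neg h, if_neg h]
    simp

/-- for d = 2r, T = |ξ₁ − ξ₂| + ∑_{i=3}^{d} ξᵢ with ξ₁,…,ξ_d independent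
geometric(q), one has P(T = m) = (1/(1+q))(1−q)^{d−1} q^m s_{d−1}(γ_m). -/
theorem law_T_even (q : ℝ) (hq : q ∈ Set.Ioo (0:ℝ) 1) (r m : ℕ) (hr : 2 ≤ r) :
    (∑' p : (ℕ × ℕ) × (Fin (2 * r - 2) → ℕ),
      if ((p.1.1 : ℤ) - p.1.2).natAbs + (∑ i, p.2 i) = m then
        (q ^ p.1.1 * (1 - q)) * (q ^ p.1.2 * (1 - q)) * (∏ i, q ^ p.2 i * (1 - q))
      else 0)
    = (1 / (1 + q)) * (1 - q) ^ (2 * r - 1) * q ^ m * sdim (2 * r - 1) m := by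
  obtain ⟨hq0, hq1⟩ := hq
  have h1q : (0:ℝ) ≤ 1 - q := by linarith
  set n := 2 * r - 2 with hn
  have hn1 : 2 * r - 1 = n + 1 := by omega
  rw [hn1]
  set Q := ENNReal.ofReal q with hQ
  set E := ENNReal.ofReal (1 - q) with hE
  have e1 : ∀ a : ℕ, ENNReal.ofReal (q ^ a * (1 - q)) = Q ^ a * E := by
    intro a
    rw [ENNReal.ofReal_mul (by positivity), ENNReal.ofReal_pow hq0.le]
  have hofr : ∀ p : (ℕ × ℕ) × (Fin n → ℕ),
      ENNReal.ofReal ((q ^ p.1.1 * (1 - q)) * (q ^ p.1.2 * (1 - q)) * (∏ i, q ^ p.2 i * (1 - q)))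
      = (Q ^ p.1.1 * E) * (Q ^ p.1.2 * E) * (∏ i, Q ^ p.2 i * E) := by
    intro p
    rw [ENNReal.ofReal_mul (by positivity), ENNReal.ofReal_mul (by positivity),
      ENNReal.ofReal_prod_of_nonneg (fun i _ => by positivity), e1, e1]
    congr 1
    exact Finset.prod_congr rfl (fun i _ => e1 _)
  have key : ∀ p : (ℕ × ℕ) × (Fin n → ℕ),
      (if ((p.1.1 : ℤ) - p.1.2).natAbs + (∑ i, p.2 i) = m then
        (q ^ p.1.1 * (1 - q)) * (q ^ p.1.2 * (1 - q)) * (∏ i, q ^ p.2 i * (1 - q)) else 0)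
      = ((if ((p.1.1 : ℤ) - p.1.2).natAbs + (∑ i, p.2 i) = m then
          (Q ^ p.1.1 * E) * (Q ^ p.1.2 * E) * (∏ i, Q ^ p.2 i * E) else 0)).toReal := by
    intro p
    split_ifs with h
    · rw [← hofr p, ENNReal.toReal_ofReal (by positivity)]
    · simp
  have hne : ∀ p : (ℕ × ℕ) × (Fin n → ℕ),
      (if ((p.1.1 : ℤ) - p.1.2).natAbs + (∑ i, p.2 i) = m then
        (Q ^ p.1.1 * E) * (Q ^ p.1.2 * E) * (∏ i, Q ^ p.2 i * E) else 0) ≠ ⊤ := by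
    intro p
    split_ifs with h
    · rw [← hofr p]; exact ENNReal.ofReal_ne_top
    · simp
  rw [tsum_congr key, ← ENNReal.tsum_toReal_eq hne, main_E, sdim_toReal]
  rw [ENNReal.toReal_mul, ENNReal.toReal_mul, ENNReal.toReal_mul]
  have hQt : Q.toReal = q := ENNReal.toReal_ofReal hq0.le
  have hEt : E.toReal = 1 - q := ENNReal.toReal_ofReal h1q
  have hq2 : (0:ℝ) < 1 - q ^ 2 := by nlinarith
  have h1Q2 : (1 - Q ^ 2) = ENNReal.ofReal (1 - q ^ 2) := by
    rw [ENNReal.ofReal_sub _ (by positivity), ENNReal.ofReal_one, ENNReal.ofReal_pow hq0.le]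
  have hinv : ((1 - Q ^ 2)⁻¹).toReal = (1 - q ^ 2)⁻¹ := by
    rw [h1Q2, ← ENNReal.ofReal_inv_of_pos hq2, ENNReal.toReal_ofReal (by positivity)]
  rw [hinv, ENNReal.toReal_pow, ENNReal.toReal_pow, hQt, hEt]
  have hfac : (1:ℝ) - q ^ 2 = (1 + q) * (1 - q) := by ring
  have h1q' : (0:ℝ) < 1 - q := by linarith
  have h1q'' : (0:ℝ) < 1 + q := by linarith
  rw [hfac, pow_succ (1 - q) (n + 1)]
  field_simp
end

section
/- Fix q ∈ (0,1) and x, y, b ∈ ℕ with x ≤ b and y ≤ b. Let ξ₁, ξ₂ be independent geometric variables with parameter q. Then P(min(b, |x + ξ₁ − ξ₂|) = y) equals ((1−q)/(1+q))(q^{|y−x|} + q^{x+y}) if 0 < y ≤ b−1; ((1−q)/(1+q)) q^x if y = 0 and y ≤ b−1; (1/(1+q)) q^b (q^{−x} + q^x) if y = b > 0; and 1 if y = b = 0. -/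
open Function

/-- The equivalence `(k, m) ↦ (m + k⁺, m + k⁻)` between `ℤ × ℕ` and `ℕ × ℕ`. -/
def diagEquiv : ℤ × ℕ ≃ ℕ × ℕ where
  toFun p := (p.2 + p.1.toNat, p.2 + (-p.1).toNat)
  invFun p := ((p.1 : ℤ) - p.2, min p.1 p.2)
  left_inv p := by
    obtain ⟨k, m⟩ := p
    simp only [Prod.mk.injEq]
    constructor <;> omega
  right_inv p := by
    obtain ⟨i, j⟩ := p
    simp only [Prod.mk.injEq]
    constructor <;> omega

lemma hasSum_tail {q : ℝ} (h0 : 0 ≤ q) (h1 : q < 1) (t : ℕ) :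
    HasSum (fun n : ℕ => if t ≤ n then q ^ n else 0) (q ^ t / (1 - q)) := by
  have hinj : Injective (fun n : ℕ => t + n) := fun a b h => by simpa using h
  have hvan : ∀ m : ℕ, m ∉ Set.range (fun n : ℕ => t + n) →
      (if t ≤ m then q ^ m else (0:ℝ)) = 0 := by
    intro m hm
    simp only [Set.mem_range, not_exists] at hm
    have : ¬ t ≤ m := fun hle => hm (m - t) (by omega)
    simp [this]
  have h : HasSum (fun n : ℕ => q ^ (t + n)) (q ^ t / (1 - q)) := by
    have := (hasSum_geometric_of_lt_one h0 h1).mul_left (q ^ t)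
    simpa [pow_add, div_eq_mul_inv] using this
  refine (hinj.hasSum_iff hvan).mp ?_
  have he : ((fun m : ℕ => if t ≤ m then q ^ m else (0:ℝ)) ∘ fun n : ℕ => t + n)
      = fun n : ℕ => q ^ (t + n) := by
    funext n; simp
  rw [he]; exact h


set_option maxHeartbeats 1000000 in
lemma key_hasSum (q : ℝ) (h0 : 0 < q) (h1 : q < 1) (b x y : ℕ) (S : ℝ)
    (hS : HasSum (fun k : ℤ => if min b ((x : ℤ) + k).natAbs = y then q ^ k.natAbs else 0) S) :
    HasSum (fun p : ℕ × ℕ =>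
      if min b (((x : ℤ) + p.1 - p.2).natAbs) = y then
        (q ^ p.1 * (1 - q)) * (q ^ p.2 * (1 - q)) else 0)
      ((1 - q) ^ 2 * (S * (1 - q ^ 2)⁻¹)) := by
  have hq2 : (0:ℝ) ≤ q ^ 2 := by positivity
  have hq2' : q ^ 2 < 1 := by nlinarith
  have hg : HasSum (fun m : ℕ => (q ^ 2) ^ m) ((1 - q ^ 2)⁻¹) := by
    simpa using hasSum_geometric_of_lt_one hq2 hq2'
  have hnn1 : ∀ k : ℤ, 0 ≤ (if min b ((x : ℤ) + k).natAbs = y then q ^ k.natAbs else (0:ℝ)) := by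
    intro k; split <;> positivity
  have hnn2 : ∀ m : ℕ, (0:ℝ) ≤ (q ^ 2) ^ m := fun m => by positivity
  have hsummable : Summable (fun z : ℤ × ℕ =>
      (if min b ((x : ℤ) + z.1).natAbs = y then q ^ z.1.natAbs else (0:ℝ)) * (q ^ 2) ^ z.2) :=
    Summable.mul_of_nonneg
      (f := fun k : ℤ => if min b ((x : ℤ) + k).natAbs = y then q ^ k.natAbs else (0:ℝ))
      (g := fun m : ℕ => (q ^ 2) ^ m) hS.summable hg.summable hnn1 hnn2
  have hmul := (hS.mul hg hsummable).mul_left ((1 - q) ^ 2)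
  apply (Equiv.hasSum_iff (α := ℝ) diagEquiv).mp
  have he : ((fun p : ℕ × ℕ =>
      if min b (((x : ℤ) + p.1 - p.2).natAbs) = y then
        (q ^ p.1 * (1 - q)) * (q ^ p.2 * (1 - q)) else 0) ∘ diagEquiv)
      = fun z : ℤ × ℕ => (1 - q) ^ 2 *
        ((if min b ((x : ℤ) + z.1).natAbs = y then q ^ z.1.natAbs else 0) * (q ^ 2) ^ z.2) := by
    funext z
    obtain ⟨k, m⟩ := z
    simp only [comp_apply, diagEquiv, Equiv.coe_fn_mk]
    have harg : (x : ℤ) + (m + k.toNat : ℕ) - (m + (-k).toNat : ℕ) = (x : ℤ) + k := by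
      push_cast; omega
    rw [harg]
    split
    · have hpow : (m + k.toNat) + (m + (-k).toNat) = k.natAbs + 2 * m := by omega
      have : q ^ (m + k.toNat) * q ^ (m + (-k).toNat) = q ^ k.natAbs * (q ^ 2) ^ m := by
        rw [← pow_add, hpow, pow_add, pow_mul]
      nlinarith [this]
    · simp
  rw [he]
  exact hmul

set_option maxHeartbeats 2000000 in
/-- law of min(b, |x + ξ₁ − ξ₂|) for independent geometric ξ₁, ξ₂ of
parameter q, when x ≤ b and y ≤ b. -/
theorem law_min_reflected_jump (q : ℝ) (hq : q ∈ Set.Ioo (0:ℝ) 1) (b x y : ℕ)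
    (hxb : x ≤ b) (hyb : y ≤ b) :
    (∑' p : ℕ × ℕ,
      if min b (((x : ℤ) + p.1 - p.2).natAbs) = y then
        (q ^ p.1 * (1 - q)) * (q ^ p.2 * (1 - q)) else 0)
    = if y < b then
        (if 1 ≤ y then ((1 - q) / (1 + q)) * (q ^ (((y : ℤ) - x).natAbs) + q ^ (x + y))
         else ((1 - q) / (1 + q)) * q ^ x)
      else
        (if 1 ≤ y then (1 / (1 + q)) * q ^ b * (q ^ (-(x : ℤ)) + q ^ (x : ℤ))
         else 1) := by
  obtain ⟨hq0, hq1⟩ := hq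
  have h1q : (1:ℝ) + q ≠ 0 := by linarith
  have h2q : (1:ℝ) - q ≠ 0 := by linarith
  have h3q : (1:ℝ) - q ^ 2 ≠ 0 := by nlinarith
  have hqne : q ≠ 0 := ne_of_gt hq0
  by_cases hyb' : y < b
  · by_cases hy1 : 1 ≤ y
    · -- interior case, y ≥ 1
      rw [if_pos hyb', if_pos hy1]
      have hvan : ∀ k : ℤ, k ∉ ({(y:ℤ) - x, -(y:ℤ) - x} : Finset ℤ) →
          (if min b ((x : ℤ) + k).natAbs = y then q ^ k.natAbs else (0:ℝ)) = 0 := by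
        intro k hk
        simp only [Finset.mem_insert, Finset.mem_singleton] at hk
        rw [if_neg]; omega
      have hS := hasSum_sum_of_ne_finset_zero (L := SummationFilter.unconditional ℤ) hvan
      have hsum : (∑ k ∈ ({(y:ℤ) - x, -(y:ℤ) - x} : Finset ℤ),
          (if min b ((x : ℤ) + k).natAbs = y then q ^ k.natAbs else (0:ℝ)))
          = q ^ (((y:ℤ) - x).natAbs) + q ^ (x + y) := by
        rw [Finset.sum_pair (by omega)]
        rw [if_pos (by omega), if_pos (by omega),
          show ((-(y:ℤ) - x).natAbs) = x + y by omega]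
      rw [hsum] at hS
      rw [(key_hasSum q hq0 hq1 b x y _ hS).tsum_eq]
      field_simp
      ring
    · -- y = 0 < b
      rw [if_pos hyb', if_neg hy1]
      have hy0 : y = 0 := by omega
      subst hy0
      have hvan : ∀ k : ℤ, k ∉ ({-(x:ℤ)} : Finset ℤ) →
          (if min b ((x : ℤ) + k).natAbs = 0 then q ^ k.natAbs else (0:ℝ)) = 0 := by
        intro k hk
        simp only [Finset.mem_singleton] at hk
        rw [if_neg]; omega
      have hS := hasSum_sum_of_ne_finset_zero (L := SummationFilter.unconditional ℤ) hvan
      have hsum : (∑ k ∈ ({-(x:ℤ)} : Finset ℤ),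
          (if min b ((x : ℤ) + k).natAbs = 0 then q ^ k.natAbs else (0:ℝ))) = q ^ x := by
        rw [Finset.sum_singleton, if_pos (by omega), show ((-(x:ℤ)).natAbs) = x by omega]
      rw [hsum] at hS
      rw [(key_hasSum q hq0 hq1 b x 0 _ hS).tsum_eq]
      field_simp
      ring
  · have hyb2 : y = b := by omega
    subst hyb2
    by_cases hy1 : 1 ≤ y
    · rw [if_neg hyb', if_pos hy1]
      have hpos : HasSum (fun n : ℕ =>
          (if min y ((x : ℤ) + (n:ℤ)).natAbs = y then q ^ ((n:ℤ)).natAbs else (0:ℝ)))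
          (q ^ (y - x) / (1 - q)) := by
        refine (hasSum_tail hq0.le hq1 (y - x)).congr_fun fun n => ?_
        rw [Int.natAbs_cast]
        exact if_congr (by omega) rfl rfl
      have hneg : HasSum (fun n : ℕ =>
          (if min y ((x : ℤ) + (-((n:ℤ) + 1))).natAbs = y then q ^ ((-((n:ℤ)+1)).natAbs) else (0:ℝ)))
          (q * (q ^ (y + x - 1) / (1 - q))) := by
        refine ((hasSum_tail hq0.le hq1 (y + x - 1)).mul_left q).congr_fun fun n => ?_
        rw [show ((-((n:ℤ)+1)).natAbs) = n + 1 by omega, mul_ite, mul_zero]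
        exact if_congr (by omega) (by ring) rfl
      have hS := HasSum.of_nat_of_neg_add_one
        (f := fun k : ℤ => if min y ((x : ℤ) + k).natAbs = y then q ^ k.natAbs else (0:ℝ))
        hpos hneg
      rw [(key_hasSum q hq0 hq1 y x y _ hS).tsum_eq]
      rw [zpow_neg, zpow_natCast, pow_sub₀ q hqne hxb,
        show q * (q ^ (y + x - 1) / (1 - q)) = q ^ (y + x - 1 + 1) / (1 - q) by rw [pow_succ]; ring,
        show y + x - 1 + 1 = y + x by omega, pow_add]
      field_simp
      ring
    · rw [if_neg hyb', if_neg hy1]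
      have hy0 : y = 0 := by omega
      subst hy0
      have hpos : HasSum (fun n : ℕ =>
          (if min 0 ((x : ℤ) + (n:ℤ)).natAbs = 0 then q ^ ((n:ℤ)).natAbs else (0:ℝ)))
          ((1 - q)⁻¹) := by
        refine (hasSum_geometric_of_lt_one hq0.le hq1).congr_fun fun n => ?_
        rw [Int.natAbs_cast, if_pos (by omega)]
      have hneg : HasSum (fun n : ℕ =>
          (if min 0 ((x : ℤ) + (-((n:ℤ) + 1))).natAbs = 0 then q ^ ((-((n:ℤ)+1)).natAbs) else (0:ℝ)))
          (q * (1 - q)⁻¹) := by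
        refine ((hasSum_geometric_of_lt_one hq0.le hq1).mul_left q).congr_fun fun n => ?_
        rw [show ((-((n:ℤ)+1)).natAbs) = n + 1 by omega, if_pos (by omega), pow_succ]
        ring
      have hS := HasSum.of_nat_of_neg_add_one
        (f := fun k : ℤ => if min 0 ((x : ℤ) + k).natAbs = 0 then q ^ k.natAbs else (0:ℝ))
        hpos hneg
      rw [(key_hasSum q hq0 hq1 0 x 0 _ hS).tsum_eq]
      field_simp
      ring
end

section
/- For q ∈ (0,1) and natural numbers x, y, z with 0 < z ≤ y: ∑_{u=0}^{z} (1_{u=0} + 2·1_{u>0}) R(u,x) P̄^{u←}(y,z) = (1−q)(1_{x=0} + 2·1_{x>0}) q^{max(x,z) + y − 2z}, where R(u,x) = ((1−q)/(1+q))(q^{|u−x|}+q^{u+x}) for x ≥ 1 and R(u,0) = ((1−q)/(1+q)) q^u, and P̄^{u←}(y,z) = (1−q) q^{y−z} if z ≥ u+1 and q^{y−u} if z = u. -/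
/-- The kernel R from the paper. -/
noncomputable def Rker (q : ℝ) (x y : ℕ) : ℝ :=
  if y = 0 then ((1 - q) / (1 + q)) * q ^ x
  else ((1 - q) / (1 + q)) * (q ^ (((x : ℤ) - y).natAbs) + q ^ (x + y))

/-- The kernel P̄^{u←}: the law at y of max(u, x − ξ), for u ≤ y ≤ x:
P̄^{u←}(x,y) = (1−q) q^{x−y} if y ≥ u+1, and q^{x−u} if y = u. -/
noncomputable def Pleft (q : ℝ) (u x y : ℕ) : ℝ :=
  if y = u then q ^ (x - u) else (1 - q) * q ^ (x - y)

lemma desint_aux (q : ℝ) (hq : q ∈ Set.Ioo (0:ℝ) 1) (x : ℕ) :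
    ∀ z : ℕ, 1 ≤ z →
    (∑ u ∈ Finset.range (z + 1),
      (if u = 0 then (1 : ℝ) else 2) * Rker q u x * (if u = z then 1 else (1 - q)))
    = (1 - q) * (if x = 0 then (1 : ℝ) else 2) * q ^ (max x z - z) := by
  obtain ⟨hq0, hq1⟩ := hq
  have h1q : (1 + q) ≠ 0 := by nlinarith
  intro z hz
  induction z, hz using Nat.le_induction with
  | base =>
    simp only [Finset.sum_range_succ, Finset.sum_range_one]
    norm_num
    rcases x with _ | _ | a
    · simp [Rker]
      field_simp
      ring
    · simp [Rker]
      field_simp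
      ring
    · have e0 : (((0:ℕ):ℤ) - ((a + 2 : ℕ):ℤ)).natAbs = a + 2 := by push_cast; omega
      have e1 : (((1:ℕ):ℤ) - ((a + 2 : ℕ):ℤ)).natAbs = a + 1 := by push_cast; omega
      have hm : max (a + 2) 1 - 1 = a + 1 := by omega
      simp only [Rker, if_neg (show a + 2 ≠ 0 by omega), e0, e1, hm]
      field_simp
      ring
  | succ z hz ih =>
    have hzz : z ≠ 0 := by omega
    rw [Finset.sum_range_succ]
    have hstep : ∀ u ∈ Finset.range (z + 1),
        (if u = 0 then (1 : ℝ) else 2) * Rker q u x * (if u = z + 1 then 1 else (1 - q))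
        = (if u = 0 then (1 : ℝ) else 2) * Rker q u x * (if u = z then 1 else (1 - q))
          - (if u = z then (if u = 0 then (1 : ℝ) else 2) * Rker q u x * q else 0) := by
      intro u hu
      simp only [Finset.mem_range] at hu
      have hne : u ≠ z + 1 := by omega
      rcases eq_or_ne u z with h | h
      · subst h
        have hu0 : u ≠ 0 := by omega
        simp only [if_neg hne, if_neg hu0, eq_self_iff_true, if_true]
        ring
      · simp only [if_neg hne, if_neg h]
        ring
    rw [Finset.sum_congr rfl hstep, Finset.sum_sub_distrib,
        Finset.sum_ite_eq' (Finset.range (z + 1)) z,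
        if_pos (Finset.mem_range.mpr (by omega)), ih,
        if_neg hzz, if_neg (show z + 1 ≠ 0 by omega), if_pos rfl]
    rcases le_or_gt x z with hxz | hxz
    · have hm1 : max x z - z = 0 := by omega
      have hm2 : max x (z + 1) - (z + 1) = 0 := by omega
      have hR : Rker q (z + 1) x = q * Rker q z x := by
        rcases Nat.eq_zero_or_pos x with rfl | hx
        · simp [Rker, pow_succ]; ring
        · have e1 : (((z + 1 : ℕ):ℤ) - (x:ℤ)).natAbs = (z - x) + 1 := by omega
          have e2 : (((z : ℕ):ℤ) - (x:ℤ)).natAbs = z - x := by omega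
          have e3 : z + 1 + x = (z + x) + 1 := by omega
          simp only [Rker, if_neg (show x ≠ 0 by omega), e1, e2, e3, pow_succ]
          ring
      rw [hm1, hm2, hR]
      ring
    · obtain ⟨a, rfl⟩ : ∃ a, x = z + 1 + a := ⟨x - z - 1, by omega⟩
      have hm1 : max (z + 1 + a) z - z = a + 1 := by omega
      have hm2 : max (z + 1 + a) (z + 1) - (z + 1) = a := by omega
      have e1 : (((z : ℕ):ℤ) - ((z + 1 + a : ℕ):ℤ)).natAbs = a + 1 := by
        push_cast; omega
      have e2 : (((z + 1 : ℕ):ℤ) - ((z + 1 + a : ℕ):ℤ)).natAbs = a := by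
        push_cast; omega
      have e3 : z + (z + 1 + a) = 2 * z + a + 1 := by omega
      have e4 : z + 1 + (z + 1 + a) = (2 * z + a + 1) + 1 := by omega
      simp only [Rker, if_neg (show z + 1 + a ≠ 0 by omega), e1, e2, e3, e4, hm1, hm2]
      field_simp
      ring

/-- identity (desintegration1) of the paper's Lemma 8. -/
theorem desintegration1 (q : ℝ) (hq : q ∈ Set.Ioo (0:ℝ) 1) (x y z : ℕ)
    (hz : 0 < z) (hzy : z ≤ y) :
    (∑ u ∈ Finset.range (z + 1),
      (if u = 0 then (1 : ℝ) else 2) * Rker q u x * Pleft q u y z)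
    = (1 - q) * (if x = 0 then (1 : ℝ) else 2) * q ^ (max x z + y - 2 * z) := by
  have key : ∀ u ∈ Finset.range (z + 1),
      (if u = 0 then (1 : ℝ) else 2) * Rker q u x * Pleft q u y z
      = ((if u = 0 then (1 : ℝ) else 2) * Rker q u x * (if u = z then 1 else (1 - q)))
        * q ^ (y - z) := by
    intro u hu
    simp only [Finset.mem_range] at hu
    unfold Pleft
    rcases eq_or_ne z u with h | h
    · subst h
      rw [if_pos rfl, if_pos rfl]
      ring
    · rw [if_neg h, if_neg (Ne.symm h)]
      ring
  rw [Finset.sum_congr rfl key, ← Finset.sum_mul, desint_aux q hq x z hz]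
  rw [show max x z + y - 2 * z = (max x z - z) + (y - z) by
        have := le_max_right x z; omega, pow_add]
  ring
end

section
/- For q ∈ (0,1), y ∈ ℕ, y' ∈ ℕ with y' ≥ 1 and y' ≤ a: ∑_{v=y'}^{a} q^{max(v,y) − 2v} · R̄^{→v}(min(y,v), y') = (1/(1−q)) q^{−a} R(y, y'), where R(y,y') = ((1−q)/(1+q))(q^{|y−y'|} + q^{y+y'}) (since y' ≥ 1), and R̄^{→v}(x, y') = ((1−q)/(1+q))(q^{|y'−x|} + q^{x+y'}) if y' ≤ v−1, and R̄^{→v}(x, v) = (1/(1+q)) q^v (q^{−x} + q^x) if y' = v > 0. -/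
/-- The kernel R̄^{→v}: the law at y of min(v, |x + ξ₁ − ξ₂|), i.e.
R̄^{→v}(x,y) = ((1−q)/(1+q))(q^{|y−x|}+q^{x+y}) for 0 < y ≤ v−1,
((1−q)/(1+q))q^x for y = 0 ≤ v−1, (1/(1+q)) q^v (q^{−x}+q^x) for y = v > 0,
and 1 for y = v = 0. -/
noncomputable def Rright (q : ℝ) (v x y : ℕ) : ℝ :=
  if y = v then
    (if 1 ≤ y then (1 / (1 + q)) * q ^ v * (q ^ (-(x : ℤ)) + q ^ (x : ℤ)) else 1)
  else Rker q x y

lemma zn_aux (q : ℝ) (n : ℕ) : q ^ (-(n:ℤ)) = (q ^ n)⁻¹ := by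
  rw [zpow_neg, zpow_natCast]

/-- identity (desintegration4) of the paper's Lemma 8:
∑_{v=y'}^{a} q^{max(v,y)−2v} R̄^{→v}(min(y,v), y') = (1/(1−q)) q^{−a} R(y,y'),
for 1 ≤ y' ≤ a, y ∈ ℕ. -/
theorem desintegration4 (q : ℝ) (hq : q ∈ Set.Ioo (0:ℝ) 1) (a y y' : ℕ)
    (hy' : 1 ≤ y') (hy'a : y' ≤ a) :
    (∑ v ∈ Finset.Icc y' a,
      q ^ ((max v y : ℤ) - 2 * v) * Rright q v (min y v) y')
    = (1 / (1 - q)) * q ^ (-(a : ℤ)) * Rker q y y' := by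
  have hq0 : q ≠ 0 := ne_of_gt hq.1
  have h1 : (1:ℝ) - q ≠ 0 := by nlinarith [hq.2]
  have h2 : (1:ℝ) + q ≠ 0 := by nlinarith [hq.1]
  induction a, hy'a using Nat.le_induction with
  | base =>
    rw [Finset.Icc_self, Finset.sum_singleton]
    rw [Rright, if_pos rfl, if_pos hy', Rker, if_neg (by omega)]
    rcases le_total y y' with h | h
    · obtain ⟨d, rfl⟩ : ∃ d, y' = y + d := ⟨y' - y, by omega⟩
      rw [max_eq_left (by omega), min_eq_left h]
      rw [show ((y:ℤ) - (y+d:ℕ)).natAbs = d by omega]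
      rw [show (((y+d:ℕ)):ℤ) - 2*((y+d:ℕ):ℤ) = -((y+d:ℕ):ℤ) by ring]
      rw [zn_aux, zn_aux, zpow_natCast]
      field_simp
      ring
    · obtain ⟨d, rfl⟩ : ∃ d, y = y' + d := ⟨y - y', by omega⟩
      rw [max_eq_right (by omega), min_eq_right h]
      rw [show (((y'+d:ℕ):ℤ) - (y':ℤ)).natAbs = d by omega]
      rw [show (((y'+d:ℕ)):ℤ) - 2*((y':ℕ):ℤ) = ((d:ℕ):ℤ) - ((y':ℕ):ℤ) by push_cast; ring]
      rw [zpow_sub₀ hq0, zpow_natCast, zpow_natCast]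
      simp only [zn_aux]
      field_simp
      ring
  | succ a ha ih =>
    rw [Finset.sum_Icc_succ_top (by omega : y' ≤ a + 1), ih, Rright, if_neg (by omega)]
    rcases le_total y (a+1) with h | h
    · rw [min_eq_left h,
        max_eq_left (show (y:ℤ) ≤ ((a+1:ℕ):ℤ) by exact_mod_cast h)]
      rw [show (((a+1:ℕ)):ℤ) - 2*((a+1:ℕ):ℤ) = -((a+1:ℕ):ℤ) by ring, zn_aux,
        zn_aux, pow_succ]
      field_simp
      ring
    · rw [min_eq_right h,
        max_eq_right (show ((a+1:ℕ):ℤ) ≤ (y:ℤ) by exact_mod_cast h)]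
      rw [Rker, if_neg (by omega), Rker, if_neg (by omega)]
      obtain ⟨f, rfl⟩ : ∃ f, a = y' + f := ⟨a - y', by omega⟩
      obtain ⟨d, rfl⟩ : ∃ d, y = (y'+f+1) + d := ⟨y - (y'+f+1), by omega⟩
      rw [show ((((y'+f+1)+d:ℕ)):ℤ) - (y':ℤ) = ((f+1+d:ℕ):ℤ) by push_cast; ring]
      rw [show (((y'+f+1:ℕ)):ℤ) - (y':ℤ) = ((f+1:ℕ):ℤ) by push_cast; ring]
      simp only [Int.natAbs_natCast]
      rw [show ((((y'+f+1)+d:ℕ)):ℤ) - 2*((y'+f+1:ℕ):ℤ) = ((d:ℕ):ℤ) - ((y'+f+1:ℕ):ℤ) by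
        push_cast; ring]
      rw [zpow_sub₀ hq0, zpow_natCast, zpow_natCast]
      simp only [zn_aux]
      field_simp
      ring
end
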